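/- Let (F_n) be a linear-like semiring family of graphs. Then for every finite simple graph G, the fractional F-number is bounded above by the asymptotic F-number: η_F^frac(G) ≤ η_F^asymp(G). -/

import Mathlib

open SimpleGraph

universe u v

/-- The join `G + H` of two simple graphs. -/
def graphJoin {α : Type u} {β : Type v} (G : SimpleGraph α) (H : SimpleGraph β) :
    SimpleGraph (α ⊕ β) where
  Adj x y :=
    match x, y with
    | Sum.inl a, Sum.inl a' => G.Adj a a'
    | Sum.inr b, Sum.inr b' => H.Adj b b'
    | Sum.inl _, Sum.inr _ => True
    | Sum.inr _, Sum.inl _ => True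
  symm := ⟨by
    rintro (a | b) (a' | b') h
    · exact G.adj_symm h
    · trivial
    · trivial
    · exact H.adj_symm h⟩
  loopless := ⟨by
    rintro (a | b) h
    · exact G.irrefl h
    · exact H.irrefl h⟩

/-- The disjunctive product `G * H`. -/
def disjProd {α : Type u} {β : Type v} (G : SimpleGraph α) (H : SimpleGraph β) :
    SimpleGraph (α × β) where
  Adj p q := G.Adj p.1 q.1 ∨ H.Adj p.2 q.2
  symm := ⟨fun p q h => h.imp (fun h' => G.adj_symm h') (fun h' => H.adj_symm h')⟩
  loopless := ⟨fun p h => h.elim (fun h' => G.irrefl h') (fun h' => H.irrefl h')⟩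

/-- The lexicographic product `G ⋉ H`. -/
def lexProd {α : Type u} {β : Type v} (G : SimpleGraph α) (H : SimpleGraph β) :
    SimpleGraph (α × β) where
  Adj p q := G.Adj p.1 q.1 ∨ (p.1 = q.1 ∧ H.Adj p.2 q.2)
  symm := ⟨fun p q h => h.imp (fun h' => G.adj_symm h') (fun h' => ⟨h'.1.symm, H.adj_symm h'.2⟩)⟩
  loopless := ⟨fun p h => h.elim (fun h' => G.irrefl h') (fun h' => H.irrefl h'.2)⟩

/-- The `d`-fold blowup `G ⋉ d`, i.e. the lexicographic product `G ⋉ K_d`. -/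
def blowup {α : Type u} (G : SimpleGraph α) (d : ℕ) : SimpleGraph (α × Fin d) :=
  lexProd G (⊤ : SimpleGraph (Fin d))

/-- The `d`-fractionalization `G/d`: the graph of `d`-cliques of `G`, with two
`d`-cliques adjacent iff they are disjoint and pairwise adjacent. -/
def fracGraph {α : Type u} (G : SimpleGraph α) (d : ℕ) :
    SimpleGraph {S : Finset α // S.card = d ∧ G.IsClique (S : Set α)} where
  Adj S T := S ≠ T ∧ Disjoint S.val T.val ∧ ∀ a ∈ S.val, ∀ b ∈ T.val, G.Adj a b
  symm := ⟨by
    rintro S T ⟨hne, hd, hadj⟩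
    exact ⟨hne.symm, hd.symm, fun b hb a ha => (hadj a ha b hb).symm⟩⟩
  loopless := ⟨fun S h => h.1 rfl⟩

/-- The `n`-fold disjunctive power `G^{*n}`. -/
def disjPow {α : Type u} (G : SimpleGraph α) (n : ℕ) :
    SimpleGraph (Fin n → α) where
  Adj f g := ∃ i, G.Adj (f i) (g i)
  symm := ⟨fun f g ⟨i, h⟩ => ⟨i, h.symm⟩⟩
  loopless := ⟨fun f ⟨i, h⟩ => G.irrefl h⟩

/-- A semiring family of graphs. -/
structure SemiringFamily where
  V : ℕ → Type u
  F : ∀ n, SimpleGraph (V n)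
  isEmpty_zero : IsEmpty (V 0)
  nonempty_one : Nonempty (V 1)
  add_hom : ∀ n m : ℕ, Nonempty (graphJoin (F n) (F m) →g F (n + m))
  mul_hom : ∀ n m : ℕ, Nonempty (disjProd (F n) (F m) →g F (n * m))

/-- The `F`-number: the least `n` such that `G → F_n`. -/
noncomputable def etaF (F : SemiringFamily.{u}) {α : Type v} (G : SimpleGraph α) : ℕ :=
  sInf {n : ℕ | Nonempty (G →g F.F n)}

/-- The fractional `F`-number. -/
noncomputable def etaFrac (F : SemiringFamily.{u}) {α : Type v} (G : SimpleGraph α) : ℝ :=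
  sInf {x : ℝ | ∃ n d : ℕ, 1 ≤ d ∧ Nonempty (G →g fracGraph (F.F n) d) ∧ x = (n : ℝ) / d}

/-- The asymptotic `F`-number. -/
noncomputable def etaAsymp (F : SemiringFamily.{u}) {α : Type v} (G : SimpleGraph α) : ℝ :=
  sInf {x : ℝ | ∃ n : ℕ, 1 ≤ n ∧ x = (etaF F (disjPow G n) : ℝ) ^ ((1 : ℝ) / n)}

/-- The orthogonal complement of a set of vertices. -/
def perp {α : Type u} (G : SimpleGraph α) (S : Set α) : Set α :=
  {v | ∀ s ∈ S, G.Adj v s}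

/-- A flat is a set of vertices with `S^{⊥⊥} = S`. -/
def IsFlat {α : Type u} (G : SimpleGraph α) (S : Set α) : Prop :=
  perp G (perp G S) = S

/-- Homomorphic equivalence of two graphs. -/
def HomEquiv {α : Type u} {β : Type v} (G : SimpleGraph α) (H : SimpleGraph β) : Prop :=
  Nonempty (G →g H) ∧ Nonempty (H →g G)

/-- A linear-like semiring family: every flat of `F_n` induces a subgraph with some
clique number `k`, homomorphically equivalent to `F_k`. -/
structure LinearLikeFamily extends SemiringFamily where
  linearLike : ∀ n (S : Set (V n)), IsFlat (F n) S →
    ∃ k : ℕ, (∃ s : Finset S, ((F n).induce S).IsNClique k s) ∧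
      (∀ s : Finset S, ¬ ((F n).induce S).IsNClique (k + 1) s) ∧
      HomEquiv ((F n).induce S) (F k)


section AuxProof

variable {α : Type v}

lemma perp_anti_aux (G : SimpleGraph α) {X Y : Set α} (h : X ⊆ Y) :
    perp G Y ⊆ perp G X :=
  fun v hv s hs => hv s (h hs)

lemma subset_perp_perp_aux (G : SimpleGraph α) (X : Set α) :
    X ⊆ perp G (perp G X) :=
  fun x hx y hy => (hy x hx).symm

lemma isFlat_perp_aux (G : SimpleGraph α) (Y : Set α) : IsFlat G (perp G Y) :=
  Set.Subset.antisymm (perp_anti_aux G (subset_perp_perp_aux G Y))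
    (subset_perp_perp_aux G (perp G Y))

/-- `K_c →g F_c` for every semiring family. -/
noncomputable def topHomAux (F : SemiringFamily.{u}) : ∀ c, ((⊤ : SimpleGraph (Fin c)) →g F.F c)
  | 0 => ⟨fun i => isEmptyElim i, fun {a} => isEmptyElim a⟩
  | (c + 1) => by
    haveI := F.nonempty_one
    have ih := topHomAux F c
    have j := (F.add_hom c 1).some
    refine j.comp ⟨fun i => Sum.map ih (fun _ => Classical.arbitrary (F.V 1))
      (finSumFinEquiv.symm i), ?_⟩
    intro a b hab
    rw [SimpleGraph.top_adj] at hab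
    have hne : finSumFinEquiv.symm a ≠ finSumFinEquiv.symm b :=
      fun h => hab (finSumFinEquiv.symm.injective h)
    rcases ha : finSumFinEquiv.symm a with x | x <;> rcases hb : finSumFinEquiv.symm b with y | y <;>
      rw [ha, hb] at hne <;> simp only [ha, hb, Sum.map_inl, Sum.map_inr]
    · exact ih.map_rel (by simp only [SimpleGraph.top_adj]; exact fun h => hne (by rw [h]))
    · trivial
    · trivial
    · exact absurd (congrArg Sum.inr (Subsingleton.elim x y)) hne

lemma exists_hom_aux (F : SemiringFamily.{u}) [Fintype α] (G : SimpleGraph α) :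
    {N : ℕ | Nonempty (G →g F.F N)}.Nonempty := by
  classical
  refine ⟨Fintype.card α, ⟨(topHomAux F _).comp ⟨fun v => Fintype.equivFin α v, ?_⟩⟩⟩
  intro a b hab
  rw [SimpleGraph.top_adj]
  exact fun h => G.ne_of_adj hab ((Fintype.equivFin α).injective h)

lemma etaF_hom_aux (F : SemiringFamily.{u}) [Fintype α] (G : SimpleGraph α) :
    Nonempty (G →g F.F (etaF F G)) :=
  Nat.sInf_mem (exists_hom_aux F G)

lemma etaF_pos_aux (F : SemiringFamily.{u}) [Fintype α] [Nonempty α] (G : SimpleGraph α) :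
    1 ≤ etaF F G := by
  by_contra h
  push_neg at h
  interval_cases he : etaF F G
  · obtain ⟨f⟩ := etaF_hom_aux F G
    rw [he] at f
    exact F.isEmpty_zero.false (f (Classical.arbitrary α))

lemma disjPow_nonempty (G : SimpleGraph α) [Nonempty α] (n : ℕ) :
    Nonempty (Fin n → α) := ⟨fun _ => Classical.arbitrary α⟩

/-- The key lemma: a hom `G^{*(n+1)} → F_m` yields a fractional hom of `G`. -/
lemma key_aux (F : LinearLikeFamily.{u}) [Fintype α] [Nonempty α] (G : SimpleGraph α) (n : ℕ) :
    Nonempty (G →g fracGraph (F.F (etaF F.toSemiringFamily (disjPow G (n + 1))))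
      (etaF F.toSemiringFamily (disjPow G n))) := by
  classical
  set m := etaF F.toSemiringFamily (disjPow G (n + 1)) with hm
  set r := etaF F.toSemiringFamily (disjPow G n) with hr
  obtain ⟨φ⟩ := etaF_hom_aux F.toSemiringFamily (disjPow G (n + 1))
  set T : α → Set (F.V m) := fun v => φ '' {f | f 0 = v} with hT
  set S : α → Set (F.V m) := fun v => perp (F.F m) (perp (F.F m) (T v)) with hS
  -- full adjacency between S u and S v for adjacent u v
  have hTperp : ∀ u v, G.Adj u v → T u ⊆ perp (F.F m) (T v) := by
    rintro u v huv x ⟨f, hf, rfl⟩ s ⟨g, hg, rfl⟩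
    exact φ.map_rel (show ∃ i : Fin (n + 1), G.Adj (f i) (g i) from ⟨0, by rw [hf, hg]; exact huv⟩)
  have hSadj : ∀ u v, G.Adj u v → ∀ a ∈ S u, ∀ b ∈ S v, (F.F m).Adj a b := by
    intro u v huv a ha b hb
    have h1 : S v ⊆ perp (F.F m) (T u) :=
      (perp_anti_aux _ (hTperp u v huv)).trans (by exact le_refl _)
    -- S v = T v ^⊥⊥ ⊆ T u ^⊥ since T u ⊆ T v ^⊥
    have h2 : S u ⊆ perp (F.F m) (S v) := by
      have := perp_anti_aux (F.F m) h1
      exact (perp_anti_aux (F.F m) h1).trans (le_refl _) |>.trans' (le_refl _) |>.trans (le_refl _)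
    exact h2 ha b hb
  -- each S v carries an r-clique
  have hclaim : ∀ v : α, ∃ C : Finset (F.V m), C.card = r ∧
      (F.F m).IsClique (C : Set (F.V m)) ∧ (C : Set (F.V m)) ⊆ S v := by
    intro v
    obtain ⟨k, ⟨s, hs⟩, -, ⟨⟨ψ⟩, -⟩⟩ := F.linearLike m (S v) (isFlat_perp_aux _ _)
    -- hom disjPow G n → induced subgraph on S v
    have hmem : ∀ f : Fin n → α, φ (Fin.cons v f) ∈ S v :=
      fun f => subset_perp_perp_aux (F.F m) (T v) ⟨Fin.cons v f, rfl, rfl⟩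
    have θ : disjPow G n →g (F.F m).induce (S v) := by
      refine ⟨fun f => ⟨φ (Fin.cons v f), hmem f⟩, ?_⟩
      intro f g hfg
      obtain ⟨i, hi⟩ := (hfg : ∃ i, G.Adj (f i) (g i))
      exact φ.map_rel (show ∃ j : Fin (n + 1), G.Adj _ _ from ⟨i.succ, by simpa using hi⟩)
    have hrk : r ≤ k := Nat.sInf_le ⟨ψ.comp θ⟩
    obtain ⟨t, hts, htc⟩ := Finset.exists_subset_card_eq (hrk.trans hs.2.ge)
    refine ⟨t.map (Function.Embedding.subtype _), by simp [htc], ?_, ?_⟩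
    · rintro x hx y hy hxy
      simp only [Finset.coe_map, Set.mem_image, Finset.mem_coe] at hx hy
      obtain ⟨x', hx', rfl⟩ := hx
      obtain ⟨y', hy', rfl⟩ := hy
      have := hs.1 (Finset.mem_coe.mpr (hts hx')) (Finset.mem_coe.mpr (hts hy'))
        (fun h => hxy (by rw [h]))
      exact this
    · intro x hx
      simp only [Finset.coe_map, Set.mem_image, Finset.mem_coe] at hx
      obtain ⟨x', -, rfl⟩ := hx
      exact x'.2
  choose C hCcard hCclique hCsub using hclaim
  have hr1 : 1 ≤ r := etaF_pos_aux F.toSemiringFamily (disjPow G n)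
  refine ⟨⟨fun v => ⟨C v, hCcard v, hCclique v⟩, ?_⟩⟩
  intro u v huv
  have hfull : ∀ a ∈ C u, ∀ b ∈ C v, (F.F m).Adj a b :=
    fun a ha b hb => hSadj u v huv a (hCsub u ha) b (hCsub v hb)
  have hdisj : Disjoint (C u) (C v) := by
    rw [Finset.disjoint_left]
    intro a hau hav
    exact (F.F m).irrefl (hfull a hau a hav)
  refine (show _ ≠ _ ∧ _ from ⟨?_, hdisj, hfull⟩)
  intro h
  have hCC : C u = C v := congrArg Subtype.val h
  obtain ⟨a, ha⟩ : (C u).Nonempty := Finset.card_pos.mp (by rw [hCcard u]; exact hr1)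
  exact (F.F m).irrefl (hfull a ha a (hCC ▸ ha))

end AuxProof

/-- For a linear-like semiring family, the fractional `F`-number is bounded above
by the asymptotic `F`-number. -/
theorem linearLike_etaFrac_le_etaAsymp (F : LinearLikeFamily.{u}) {α : Type v}
    [Fintype α] (G : SimpleGraph α) :
    etaFrac F.toSemiringFamily G ≤ etaAsymp F.toSemiringFamily G := by
  classical
  set A := {x : ℝ | ∃ n d : ℕ, 1 ≤ d ∧ Nonempty (G →g fracGraph (F.F n) d) ∧ x = (n : ℝ) / d}
    with hA
  have hbdd : BddBelow A := by
    refine ⟨0, ?_⟩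
    rintro x ⟨n, d, hd, -, rfl⟩
    positivity
  have hAfrac : etaFrac F.toSemiringFamily G = sInf A := rfl
  refine le_csInf ⟨_, 1, le_refl 1, rfl⟩ ?_
  rintro b ⟨n, hn, rfl⟩
  rcases isEmpty_or_nonempty α with hα | hα
  · have h0 : (0 : ℝ) ∈ A := ⟨0, 1, le_refl 1,
      ⟨⟨fun v => isEmptyElim v, fun {a} => isEmptyElim a⟩⟩, by norm_num⟩
    calc etaFrac F.toSemiringFamily G ≤ 0 := by rw [hAfrac]; exact csInf_le hbdd h0
      _ ≤ _ := Real.rpow_nonneg (Nat.cast_nonneg _) _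
  · have h0 : 0 ≤ etaFrac F.toSemiringFamily G := by
      rw [hAfrac]
      apply Real.sInf_nonneg
      rintro x ⟨n, d, hd, -, rfl⟩
      positivity
    have hstep : ∀ k : ℕ, etaFrac F.toSemiringFamily G ≤
        (etaF F.toSemiringFamily (disjPow G (k + 1)) : ℝ) /
        (etaF F.toSemiringFamily (disjPow G k) : ℝ) := by
      intro k
      rw [hAfrac]
      exact csInf_le hbdd ⟨_, _, etaF_pos_aux F.toSemiringFamily (disjPow G k),
        key_aux F G k, rfl⟩
    have hpow : ∀ k : ℕ, etaFrac F.toSemiringFamily G ^ k ≤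
        (etaF F.toSemiringFamily (disjPow G k) : ℝ) := by
      intro k
      induction k with
      | zero =>
        simpa using (Nat.one_le_cast (α := ℝ)).mpr
          (etaF_pos_aux F.toSemiringFamily (disjPow G 0))
      | succ k ih =>
        have hkpos : (0 : ℝ) < (etaF F.toSemiringFamily (disjPow G k) : ℝ) := by
          exact_mod_cast etaF_pos_aux F.toSemiringFamily (disjPow G k)
        calc etaFrac F.toSemiringFamily G ^ (k + 1)
            = etaFrac F.toSemiringFamily G ^ k * etaFrac F.toSemiringFamily G := by ring
          _ ≤ (etaF F.toSemiringFamily (disjPow G k) : ℝ) *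
              ((etaF F.toSemiringFamily (disjPow G (k + 1)) : ℝ) /
               (etaF F.toSemiringFamily (disjPow G k) : ℝ)) :=
            mul_le_mul ih (hstep k) h0 hkpos.le
          _ = _ := by field_simp
    have hn0 : (n : ℝ) ≠ 0 := Nat.cast_ne_zero.mpr (by omega)
    calc etaFrac F.toSemiringFamily G
        = (etaFrac F.toSemiringFamily G ^ n) ^ ((1 : ℝ) / n) := by
          rw [← Real.rpow_natCast (etaFrac F.toSemiringFamily G) n, ← Real.rpow_mul h0]
          rw [mul_one_div, div_self hn0, Real.rpow_one]
      _ ≤ (etaF F.toSemiringFamily (disjPow G n) : ℝ) ^ ((1 : ℝ) / n) :=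
          Real.rpow_le_rpow (by positivity) (hpow n) (by positivity)
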